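/- Every automatic equivalence relation on ℕ has only finitely many equivalence classes, i.e. its quotient is a finite type. -/

import Mathlib

/-- Binary representation of `n : ℕ` over the alphabet `Option Bool`,
where the separator `□` is `none` and the digits `0`, `1` are `some false`, `some true`. -/
def natBits (n : ℕ) : List (Option Bool) := (Nat.bits n).map some

/-- The language `{ bits(m) ++ [□] ++ bits(n) | E relates m and n }` associated to an
equivalence relation `E` on ℕ. -/
def autoLang (E : Setoid ℕ) : Language (Option Bool) :=
  {w | ∃ m n : ℕ, E.r m n ∧ w = natBits m ++ [none] ++ natBits n}

/-- An equivalence relation on ℕ is automatic if its associated language is regular,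
i.e. accepted by some deterministic finite automaton. -/
def IsAutomatic (E : Setoid ℕ) : Prop := (autoLang E).IsRegular

lemma bits_eq_nil {n : ℕ} (h : Nat.bits n = []) : n = 0 := by
  have := Nat.size_eq_bits_len n
  rw [h] at this
  simpa [Nat.size_eq_zero] using this.symm

lemma bits_injective : Function.Injective Nat.bits := by
  intro m
  induction m using Nat.strong_induction_on with
  | _ m ih =>
    intro n h
    rcases Nat.eq_zero_or_pos m with hm | hm
    · subst hm
      rw [Nat.zero_bits] at h
      exact (bits_eq_nil h.symm).symm
    · have hb : Nat.bodd m = Nat.bodd n := by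
        rw [Nat.bodd_eq_bits_head, Nat.bodd_eq_bits_head, h]
      have hd2 : Nat.div2 m = Nat.div2 n := by
        apply ih _ (Nat.binaryRec_decreasing (by omega))
        rw [Nat.div2_bits_eq_tail, Nat.div2_bits_eq_tail, h]
      calc m = Nat.bit (Nat.bodd m) (Nat.div2 m) := (Nat.bit_bodd_div2 m).symm
        _ = Nat.bit (Nat.bodd n) (Nat.div2 n) := by rw [hb, hd2]
        _ = n := Nat.bit_bodd_div2 n

lemma natBits_injective : Function.Injective natBits := fun m n h =>
  bits_injective (List.map_injective_iff.2 (Option.some_injective _) h)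

lemma none_not_mem_natBits (n : ℕ) : none ∉ natBits n := by
  simp [natBits]

lemma sep_unique : ∀ (a c : List (Option Bool)) (b d : List (Option Bool)),
    none ∉ a → none ∉ c → a ++ none :: b = c ++ none :: d → a = c ∧ b = d := by
  intro a
  induction a with
  | nil =>
    intro c b d _ hc h
    cases c with
    | nil => simpa using h
    | cons x xs =>
      simp at h
      rcases h with ⟨hx, _⟩
      exact absurd (hx ▸ List.mem_cons_self (a := x) (l := xs)) (by simp_all)
  | cons x xs ih =>
    intro c b d ha hc h
    cases c with
    | nil =>
      simp at h
      exact absurd (h.1 ▸ List.mem_cons_self (a := x) (l := xs)) ha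
    | cons y ys =>
      simp only [List.cons_append, List.cons.injEq] at h
      obtain ⟨hxy, htail⟩ := h
      have := ih ys b d (fun hm => ha (List.mem_cons_of_mem _ hm))
        (fun hm => hc (List.mem_cons_of_mem _ hm)) htail
      exact ⟨by rw [hxy, this.1], this.2⟩

theorem automatic_finite_quotient (E : Setoid ℕ) (hE : IsAutomatic E) :
    Finite (Quotient E) := by
  obtain ⟨σ, hfin, M, hM⟩ := hE
  have key : ∀ m n : ℕ,
      M.evalFrom M.start (natBits m ++ [none]) = M.evalFrom M.start (natBits n ++ [none]) →
      E.r m n := by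
    intro m n h
    have hn : natBits n ++ [none] ++ natBits n ∈ M.accepts := by
      rw [hM]
      exact ⟨n, n, E.refl n, rfl⟩
    have hmn : natBits m ++ [none] ++ natBits n ∈ M.accepts := by
      rw [DFA.mem_accepts] at hn ⊢
      rwa [DFA.eval, DFA.evalFrom_of_append, h, ← DFA.evalFrom_of_append]
    rw [hM] at hmn
    obtain ⟨m', n', hE', heq⟩ := hmn
    have := sep_unique (natBits m) (natBits m') (natBits n) (natBits n')
      (none_not_mem_natBits m) (none_not_mem_natBits m') (by simpa using heq)
    obtain ⟨h1, h2⟩ := this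
    rw [natBits_injective h1, natBits_injective h2]
    exact hE'
  have : Function.Injective
      (fun q : Quotient E => M.evalFrom M.start (natBits q.out ++ [none])) := by
    intro q q' h
    have := key q.out q'.out h
    rw [← Quotient.out_eq q, ← Quotient.out_eq q']
    exact Quotient.sound this
  exact Finite.of_injective _ this
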